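/- arXiv:1211.2301 — 2 statements merged into one kernel-verified Lean document; each statement's English description precedes it below -/
import Mathlib

section
/- Let e be a transitive relation on a set E and let (aᵢ)_{i∈I} be a family of clopen subsets of e. Then: (i) the family {aᵢ : i ∈ I} has a greatest lower bound in the poset Clop(e) if and only if int(⋂ᵢ aᵢ) is clopen, in which case the greatest lower bound equals int(⋂ᵢ aᵢ); (ii) the family has a least upper bound in Clop(e) if and only if cl(⋃ᵢ aᵢ) is clopen, in which case the least upper bound equals cl(⋃ᵢ aᵢ). -/
/-- A binary relation (as a set of pairs) is transitive. -/
def TransRel {E : Type*} (a : Set (E × E)) : Prop :=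
  ∀ x y z : E, (x, y) ∈ a → (y, z) ∈ a → (x, z) ∈ a

/-- The transitive closure of a set of pairs. -/
def tcl {E : Type*} (a : Set (E × E)) : Set (E × E) :=
  {p | Relation.TransGen (fun u v => (u, v) ∈ a) p.1 p.2}

/-- The interior of `a` relative to `e`. -/
def tint {E : Type*} (e a : Set (E × E)) : Set (E × E) :=
  e \ tcl (e \ a)

/-- `a` is a closed subset of `e`. -/
def IsClosedIn {E : Type*} (e a : Set (E × E)) : Prop :=
  a ⊆ e ∧ TransRel a

/-- `a` is an open subset of `e`. -/
def IsOpenIn {E : Type*} (e a : Set (E × E)) : Prop :=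
  a ⊆ e ∧ TransRel (e \ a)

/-- `a` is a clopen subset of `e`. -/
def IsClopenIn {E : Type*} (e a : Set (E × E)) : Prop :=
  a ⊆ e ∧ TransRel a ∧ TransRel (e \ a)

/-- `a` is a regular closed subset of `e`. -/
def RegClosed {E : Type*} (e a : Set (E × E)) : Prop :=
  a ⊆ e ∧ a = tcl (tint e a)

/-- The reflexive preordering `x ⊴ y` associated with `e`. -/
def rle {E : Type*} (e : Set (E × E)) (x y : E) : Prop :=
  (x, y) ∈ e ∨ x = y

/-- `x ≡ y`: `x ⊴ y` and `y ⊴ x`. -/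
def eqv {E : Type*} (e : Set (E × E)) (x y : E) : Prop :=
  rle e x y ∧ rle e y x

/-- `e` is square-free. -/
def SqFree {E : Type*} (e : Set (E × E)) : Prop :=
  ∀ a b x y : E, (a, b) ∈ e → rle e a x → rle e x b → rle e a y → rle e y b →
    rle e x y ∨ rle e y x

/-- The interval `[a,b] = {x | a ⊴ x ⊴ b}`. -/
def cce {E : Type*} (e : Set (E × E)) (a b : E) : Set E :=
  {x | rle e a x ∧ rle e x b}

/-- `(a,b,U) ∈ F(e)`. -/
def Ftriple {E : Type*} (e : Set (E × E)) (a b : E) (U : Set E) : Prop :=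
  (a, b) ∈ e ∧ U ⊆ cce e a b ∧ (a ≠ b → a ∉ U ∧ b ∈ U)

/-- The clopen set `⟨a,b,U⟩ = e ∩ (({a} ∪ Uᶜ) × ({b} ∪ U))`. -/
def pji {E : Type*} (e : Set (E × E)) (a b : E) (U : Set E) : Set (E × E) :=
  e ∩ ((({a} : Set E) ∪ (cce e a b \ U)) ×ˢ (({b} : Set E) ∪ U))

/-- The set `p₋` associated with `p = ⟨a,b,U⟩`: if `a ≠ b` it is
`p \ ([a] × [b])`, and if `a = b` it is `p \ {(a,a)}`. -/
def pminus {E : Type*} (e : Set (E × E)) (a b : E) (U : Set E) : Set (E × E) :=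
  {z ∈ pji e a b U | ¬ ((a ≠ b ∧ eqv e z.1 a ∧ eqv e z.2 b) ∨ (a = b ∧ z = (a, a)))}

section Aux
variable {E : Type*}

lemma tcl_transRel (a : Set (E × E)) : TransRel (tcl a) :=
  fun _ _ _ h1 h2 => Relation.TransGen.trans h1 h2

lemma subset_tcl (a : Set (E × E)) : a ⊆ tcl a :=
  fun _ hp => Relation.TransGen.single hp

lemma tcl_min {a b : Set (E × E)} (hab : a ⊆ b) (hb : TransRel b) : tcl a ⊆ b := by
  rintro ⟨x, y⟩ hxy
  simp only [tcl, Set.mem_setOf_eq] at hxy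
  induction hxy with
  | single h => exact hab h
  | tail _ h2 ih => exact hb _ _ _ ih (hab h2)

lemma clopen_compl {e c : Set (E × E)} (hc : IsClopenIn e c) : IsClopenIn e (e \ c) := by
  refine ⟨Set.diff_subset, hc.2.2, ?_⟩
  rw [Set.diff_diff_cancel_left hc.1]
  exact hc.2.1

lemma tint_subset {e A : Set (E × E)} : tint e A ⊆ A := by
  intro p hp
  by_contra h
  exact hp.2 (subset_tcl _ ⟨hp.1, h⟩)

lemma tint_open {e : Set (E × E)} (he : TransRel e) (A : Set (E × E)) :
    TransRel (e \ tint e A) := by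
  have h : e \ tint e A = tcl (e \ A) := by
    rw [tint, Set.diff_diff_cancel_left (tcl_min Set.diff_subset he)]
  rw [h]
  exact tcl_transRel _

lemma open_subset_tint {e A b : Set (E × E)} (hbe : b ⊆ e) (hbo : TransRel (e \ b))
    (hbA : b ⊆ A) : b ⊆ tint e A := by
  intro p hp
  refine ⟨hbe hp, fun h => ?_⟩
  have : tcl (e \ A) ⊆ e \ b :=
    tcl_min (fun q hq => ⟨hq.1, fun hqb => hq.2 (hbA hqb)⟩) hbo
  exact (this h).2 hp

lemma pji_clopen {e : Set (E × E)} (he : TransRel e) {x y : E} (hxy : (x, y) ∈ e)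
    {U : Set E} (hU : U ⊆ cce e x y) : IsClopenIn e (pji e x y U) := by
  refine ⟨Set.inter_subset_left, ?_, ?_⟩
  · rintro s t w ⟨hst, hsL, -⟩ ⟨htw, -, hwR⟩
    exact ⟨he _ _ _ hst htw, hsL, hwR⟩
  · rintro s t w ⟨hst, hst'⟩ ⟨htw, htw'⟩
    refine ⟨he _ _ _ hst htw, fun hsw => ?_⟩
    obtain ⟨-, hsL, hwR⟩ := hsw
    have hxt : (x, t) ∈ e := by
      rcases hsL with hs | ⟨⟨hxs, -⟩, -⟩
      · rw [Set.mem_singleton_iff] at hs; rw [← hs]; exact hst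
      · rcases hxs with h | h
        · exact he _ _ _ h hst
        · rw [h]; exact hst
    have hty : (t, y) ∈ e := by
      rcases hwR with hw | hw
      · rw [Set.mem_singleton_iff] at hw; rw [← hw]; exact htw
      · rcases (hU hw).2 with h | h
        · exact he _ _ _ htw h
        · rw [← h]; exact htw
    by_cases htU : t ∈ U
    · exact hst' ⟨hst, hsL, Or.inr htU⟩
    · exact htw' ⟨htw, Or.inr ⟨⟨Or.inl hxt, Or.inl hty⟩, htU⟩, hwR⟩

/-- Every open subset of `e` is a union of clopen sets. -/
lemma exists_clopen_of_open {e u : Set (E × E)} (he : TransRel e) (hu : u ⊆ e)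
    (hop : TransRel (e \ u)) {p : E × E} (hp : p ∈ u) :
    ∃ c, IsClopenIn e c ∧ p ∈ c ∧ c ⊆ u := by
  obtain ⟨x, y⟩ := p
  have hxye : (x, y) ∈ e := hu hp
  set U : Set E := {t | t ∈ cce e x y ∧ (t = y ∨ (x, t) ∈ u)} with hUdef
  have hUsub : U ⊆ cce e x y := fun t ht => ht.1
  refine ⟨pji e x y U, pji_clopen he hxye hUsub,
    ⟨hxye, Or.inl rfl, Or.inl rfl⟩, ?_⟩
  -- facts about s ∈ cce \ U, s ≠ x
  have key2 : ∀ s, s ∈ cce e x y \ U → s ≠ x → (x, s) ∈ e ∧ (x, s) ∉ u ∧ (s, y) ∈ u := by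
    intro s ⟨hs, hsU⟩ hsx
    have h1 : s ≠ y ∧ (x, s) ∉ u := by
      by_contra h
      push_neg at h
      rcases Classical.em (s = y) with h' | h'
      · exact hsU ⟨hs, Or.inl h'⟩
      · exact hsU ⟨hs, Or.inr (h h')⟩
    have hxs : (x, s) ∈ e := by
      rcases hs.1 with h | h
      · exact h
      · exact absurd h.symm hsx
    have hsy : (s, y) ∈ e := by
      rcases hs.2 with h | h
      · exact h
      · exact absurd h h1.1
    refine ⟨hxs, h1.2, ?_⟩
    by_contra h
    exact (hop _ _ _ ⟨hxs, h1.2⟩ ⟨hsy, h⟩).2 hp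
  rintro ⟨s, w⟩ ⟨hswe, hsL, hwR⟩
  have hw' : w = y ∨ (x, w) ∈ u := by
    rcases hwR with hw | hw
    · exact Or.inl (Set.mem_singleton_iff.mp hw)
    · exact hw.2
  by_cases hsx : s = x
  · subst hsx
    rcases hw' with rfl | h
    · exact hp
    · exact h
  · rcases hsL with hs | hs
    · exact absurd (Set.mem_singleton_iff.mp hs) hsx
    · obtain ⟨hxs, hxsu, hsyu⟩ := key2 s hs hsx
      rcases hw' with rfl | h
      · exact hsyu
      · by_contra hswu
        exact (hop _ _ _ ⟨hxs, hxsu⟩ ⟨hswe, hswu⟩).2 h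

end Aux

/-- a family of clopen subsets of `e` has a greatest lower bound in `Clop(e)`
iff `int` of its intersection is clopen, in which case they are equal; and it has a least
upper bound in `Clop(e)` iff `cl` of its union is clopen, in which case they are equal. -/
theorem clopen_meets_joins {E : Type*} (e : Set (E × E)) (he : TransRel e)
    {ι : Type*} (a : ι → Set (E × E)) (ha : ∀ i, IsClopenIn e (a i)) :
    (((∃ g, IsClopenIn e g ∧ (∀ i, g ⊆ a i) ∧
        ∀ b, IsClopenIn e b → (∀ i, b ⊆ a i) → b ⊆ g) ↔
      IsClopenIn e (tint e (⋂ i, a i))) ∧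
      (∀ g, IsClopenIn e g → (∀ i, g ⊆ a i) →
        (∀ b, IsClopenIn e b → (∀ i, b ⊆ a i) → b ⊆ g) → g = tint e (⋂ i, a i))) ∧
    (((∃ s, IsClopenIn e s ∧ (∀ i, a i ⊆ s) ∧
        ∀ b, IsClopenIn e b → (∀ i, a i ⊆ b) → s ⊆ b) ↔
      IsClopenIn e (tcl (⋃ i, a i))) ∧
      (∀ s, IsClopenIn e s → (∀ i, a i ⊆ s) →
        (∀ b, IsClopenIn e b → (∀ i, a i ⊆ b) → s ⊆ b) → s = tcl (⋃ i, a i))) := by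
  classical
  set A := ⋂ i, a i with hA
  have hsubA : tint e A ⊆ A := tint_subset
  have hmo : TransRel (e \ tint e A) := tint_open he A
  have hme : tint e A ⊆ e := Set.diff_subset
  have meet_unique : ∀ g, IsClopenIn e g → (∀ i, g ⊆ a i) →
      (∀ b, IsClopenIn e b → (∀ i, b ⊆ a i) → b ⊆ g) → g = tint e A := by
    intro g hg hlb hglb
    apply Set.Subset.antisymm
    · exact open_subset_tint hg.1 hg.2.2 (Set.subset_iInter hlb)
    · intro p hp
      obtain ⟨c, hc, hpc, hcm⟩ := exists_clopen_of_open he hme hmo hp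
      exact hglb c hc (fun i => (hcm.trans hsubA).trans (Set.iInter_subset a i)) hpc
  have hBe : (⋃ i, a i) ⊆ e := Set.iUnion_subset fun i => (ha i).1
  have hse : tcl (⋃ i, a i) ⊆ e := tcl_min hBe he
  have hstr : TransRel (tcl (⋃ i, a i)) := tcl_transRel _
  have join_le : ∀ b, IsClopenIn e b → (∀ i, a i ⊆ b) → tcl (⋃ i, a i) ⊆ b :=
    fun b hb hab => tcl_min (Set.iUnion_subset hab) hb.2.1
  have join_unique : ∀ s, IsClopenIn e s → (∀ i, a i ⊆ s) →
      (∀ b, IsClopenIn e b → (∀ i, a i ⊆ b) → s ⊆ b) → s = tcl (⋃ i, a i) := by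
    intro s hs hub hlub
    apply Set.Subset.antisymm
    · intro p hp
      by_contra hns
      have hopen : TransRel (e \ (e \ tcl (⋃ i, a i))) := by
        rw [Set.diff_diff_cancel_left hse]; exact hstr
      obtain ⟨c, hc, hpc, hcsub⟩ :=
        exists_clopen_of_open he Set.diff_subset hopen (p := p) ⟨hs.1 hp, hns⟩
      have hsc : s ⊆ e \ c := by
        refine hlub (e \ c) (clopen_compl hc) (fun i q hq => ⟨(ha i).1 hq, fun hqc => ?_⟩)
        exact (hcsub hqc).2 (subset_tcl _ (Set.mem_iUnion.mpr ⟨i, hq⟩))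
      exact (hsc hp).2 hpc
    · exact tcl_min (Set.iUnion_subset hub) hs.2.1
  constructor
  · constructor
    · constructor
      · rintro ⟨g, hg, hlb, hglb⟩
        rw [← meet_unique g hg hlb hglb]; exact hg
      · intro hm
        exact ⟨tint e A, hm, fun i => hsubA.trans (Set.iInter_subset a i),
          fun b hb hba => open_subset_tint hb.1 hb.2.2 (Set.subset_iInter hba)⟩
    · exact meet_unique
  · constructor
    · constructor
      · rintro ⟨s, hs, hub, hlub⟩
        rw [← join_unique s hs hub hlub]; exact hs
      · intro hcl
        exact ⟨tcl (⋃ i, a i), hcl,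
          fun i => (Set.subset_iUnion a i).trans (subset_tcl _), join_le⟩
    · exact join_unique
end

section
/- Let e be an antisymmetric transitive relation on a finite set E (that is, (x,y) ∈ e and (y,x) ∈ e imply x = y). Then the join-dependency relation D on the completely join-irreducible elements of the lattice Reg(e) is transitive; since D is irreflexive by definition, D is a strict ordering. -/
/-- `q'` is the unique lower cover of the completely join-irreducible element `p` of
`Reg(e)`. -/
def IsLowerCoverIn {E : Type*} (e p q' : Set (E × E)) : Prop :=
  RegClosed e q' ∧ q' ⊂ p ∧ ∀ x, RegClosed e x → x ⊂ p → x ⊆ q'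

/-- `p` is a completely join-irreducible element of `Reg(e)`. -/
def CJIrr {E : Type*} (e p : Set (E × E)) : Prop :=
  RegClosed e p ∧ ∃ q', IsLowerCoverIn e p q'

/-- The join-dependency relation on completely join-irreducible elements of `Reg(e)`. -/
def JoinDep {E : Type*} (e p q : Set (E × E)) : Prop :=
  p ≠ q ∧ ∃ q', IsLowerCoverIn e q q' ∧
    ∃ x, RegClosed e x ∧ p ⊆ tcl (q ∪ x) ∧ ¬ p ⊆ tcl (q' ∪ x)

section PJI
variable {E : Type*} {e : Set (E × E)} {a b : E} {U : Set E}

lemma mem_cce {x : E} : x ∈ cce e a b ↔ rle e a x ∧ rle e x b := Iff.rfl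

lemma mem_pji {c d : E} :
    (c,d) ∈ pji e a b U ↔
      (c,d) ∈ e ∧ (c = a ∨ (c ∈ cce e a b ∧ c ∉ U)) ∧ (d = b ∨ d ∈ U) := by
  simp [pji, Set.mem_prod]

end PJI


section PJI2
variable {E : Type*} {e : Set (E × E)} {a b : E} {U : Set E}

lemma mem_tcl' {x y : E} {s : Set (E×E)} :
    (x,y) ∈ tcl s ↔ Relation.TransGen (fun u v => (u, v) ∈ s) x y := Iff.rfl

lemma tcl_sub' {s t : Set (E×E)} (hat : s ⊆ t) (ht : TransRel t) : tcl s ⊆ t := by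
  rintro ⟨x, y⟩ h
  rw [mem_tcl'] at h
  induction h with
  | single h => exact hat h
  | tail h1 h2 ih => exact ht _ _ _ ih (hat h2)

lemma sub_tcl' {s : Set (E×E)} : s ⊆ tcl s := by
  rintro ⟨x, y⟩ h; exact Relation.TransGen.single h

lemma tcl_eq' {s : Set (E×E)} (hs : TransRel s) : tcl s = s :=
  le_antisymm (tcl_sub' le_rfl hs) sub_tcl'

lemma tcl_empty' : tcl (∅ : Set (E × E)) = (∅ : Set (E×E)) := by
  apply le_antisymm _ (Set.empty_subset _)
  rintro ⟨x, y⟩ h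
  rw [mem_tcl'] at h
  induction h with
  | single h => exact h.elim
  | tail h1 h2 ih => exact h2.elim

lemma rle_trans' (he : TransRel e) {x y z : E} (h1 : rle e x y) (h2 : rle e y z) :
    rle e x z := by
  rcases h1 with h1 | rfl
  · rcases h2 with h2 | rfl
    · exact Or.inl (he _ _ _ h1 h2)
    · exact Or.inl h1
  · exact h2

lemma rle_of_mem' {x y : E} (h : (x,y) ∈ e) : rle e x y := Or.inl h

lemma mem_of_rle' {x y : E} (h : rle e x y) (hne : x ≠ y) : (x,y) ∈ e := by
  rcases h with h | rfl
  · exact h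
  · exact absurd rfl hne

lemma rle_anti' (hanti : ∀ x y : E, (x, y) ∈ e → (y, x) ∈ e → x = y)
    {x y : E} (h1 : rle e x y) (h2 : rle e y x) : x = y := by
  rcases h1 with h1 | rfl
  · rcases h2 with h2 | rfl
    · exact hanti _ _ h1 h2
    · rfl
  · rfl

lemma Ftriple.mem_ab (hF : Ftriple e a b U) : (a,b) ∈ pji e a b U :=
  mem_pji.2 ⟨hF.1, Or.inl rfl, Or.inl rfl⟩

lemma pji_sub_e : pji e a b U ⊆ e := Set.inter_subset_left

lemma pji_bounds (hF : Ftriple e a b U) {c d : E} (h : (c,d) ∈ pji e a b U) :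
    rle e a c ∧ rle e d b := by
  obtain ⟨-, hc, hd⟩ := mem_pji.1 h
  constructor
  · rcases hc with rfl | hc
    · exact Or.inr rfl
    · exact hc.1.1
  · rcases hd with rfl | hd
    · exact Or.inr rfl
    · exact (hF.2.1 hd).2

lemma side_disj (hF : Ftriple e a b U) (hab : a ≠ b) {c : E}
    (h1 : c = a ∨ (c ∈ cce e a b ∧ c ∉ U)) (h2 : c = b ∨ c ∈ U) : False := by
  rcases h1 with rfl | ⟨-, hcU⟩
  · rcases h2 with h2 | h2
    · exact hab h2
    · exact (hF.2.2 hab).1 h2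
  · rcases h2 with rfl | h2
    · exact hcU (hF.2.2 hab).2
    · exact hcU h2

lemma transRel_of_sub (hF : Ftriple e a b U) (hab : a ≠ b) {s : Set (E×E)}
    (hs : s ⊆ pji e a b U) : TransRel s := by
  intro x y z hxy hyz
  exact (side_disj hF hab (mem_pji.1 (hs hyz)).2.1 (mem_pji.1 (hs hxy)).2.2).elim

lemma pji_loop (hanti : ∀ x y : E, (x, y) ∈ e → (y, x) ∈ e → x = y)
    (hF : Ftriple e a a U) : pji e a a U = {(a,a)} := by
  ext ⟨c,d⟩
  rw [mem_pji]
  constructor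
  · rintro ⟨hcd, hc, hd⟩
    have hc' : c = a := by
      rcases hc with rfl | hc
      · rfl
      · exact rle_anti' hanti hc.1.2 hc.1.1
    have hd' : d = a := by
      rcases hd with rfl | hd
      · rfl
      · exact rle_anti' hanti (hF.2.1 hd).2 (hF.2.1 hd).1
    simp [hc', hd']
  · rintro h
    rw [Set.mem_singleton_iff, Prod.mk.injEq] at h
    obtain ⟨rfl, rfl⟩ := h
    exact ⟨hF.1, Or.inl rfl, Or.inl rfl⟩

lemma pji_open (he : TransRel e) (hF : Ftriple e a b U) :
    TransRel (e \ pji e a b U) := by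
  intro x y z hxy hyz
  refine ⟨he _ _ _ hxy.1 hyz.1, fun hxz => ?_⟩
  obtain ⟨hxze, hxA, hzB⟩ := mem_pji.1 hxz
  have rax : rle e a x := by
    rcases hxA with rfl | h
    · exact Or.inr rfl
    · exact h.1.1
  have rzb : rle e z b := by
    rcases hzB with rfl | h
    · exact Or.inr rfl
    · exact (hF.2.1 h).2
  by_cases hyB : y = b ∨ y ∈ U
  · exact hxy.2 (mem_pji.2 ⟨hxy.1, hxA, hyB⟩)
  · push_neg at hyB
    have ray : rle e a y := rle_trans' he rax (rle_of_mem' hxy.1)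
    have ryb : rle e y b := rle_trans' he (rle_of_mem' hyz.1) rzb
    exact hyz.2 (mem_pji.2 ⟨hyz.1, Or.inr ⟨⟨ray, ryb⟩, hyB.2⟩, hzB⟩)

lemma pji_transRel (hanti : ∀ x y : E, (x, y) ∈ e → (y, x) ∈ e → x = y)
    (hF : Ftriple e a b U) : TransRel (pji e a b U) := by
  by_cases hab : a = b
  · subst hab
    rw [pji_loop hanti hF]
    rintro x y z hxy hyz
    rw [Set.mem_singleton_iff, Prod.mk.injEq] at hxy hyz ⊢
    exact ⟨hxy.1, hyz.2⟩
  · exact transRel_of_sub hF hab le_rfl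

lemma clopen_pji (he : TransRel e) (hanti : ∀ x y : E, (x, y) ∈ e → (y, x) ∈ e → x = y)
    (hF : Ftriple e a b U) : IsClopenIn e (pji e a b U) :=
  ⟨pji_sub_e, pji_transRel hanti hF, pji_open he hF⟩

lemma IsClopenIn.compl {s : Set (E×E)} (h : IsClopenIn e s) : IsClopenIn e (e \ s) :=
  ⟨Set.diff_subset, h.2.2, by rw [Set.diff_diff_cancel_left h.1]; exact h.2.1⟩

lemma IsClopenIn.regClosed {s : Set (E×E)} (h : IsClopenIn e s) : RegClosed e s := by
  refine ⟨h.1, ?_⟩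
  rw [tint, tcl_eq' h.2.2, Set.diff_diff_cancel_left h.1, tcl_eq' h.2.1]

lemma regClosed_empty (he : TransRel e) : RegClosed e (∅ : Set (E×E)) := by
  refine ⟨Set.empty_subset _, ?_⟩
  rw [tint, Set.diff_empty, tcl_eq' he, Set.diff_self, tcl_empty']

end PJI2

section PJI3
variable {E : Type*} {e : Set (E × E)} {a b : E} {U : Set E}

lemma open_minus (he : TransRel e) (hanti : ∀ x y : E, (x, y) ∈ e → (y, x) ∈ e → x = y)
    (hF : Ftriple e a b U) (hab : a ≠ b) :
    TransRel (e \ (pji e a b U \ {(a,b)})) := by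
  intro x y z hxy hyz
  refine ⟨he _ _ _ hxy.1 hyz.1, fun hxz => ?_⟩
  obtain ⟨hxz', hne⟩ := hxz
  obtain ⟨hxze, hxA, hzB⟩ := mem_pji.1 hxz'
  by_cases hxyp : (x,y) ∈ pji e a b U
  · have h1 : (x,y) = (a,b) := by
      by_contra hcon
      exact hxy.2 ⟨hxyp, hcon⟩
    rw [Prod.mk.injEq] at h1
    have rzb : rle e z b := by
      rcases hzB with rfl | h
      · exact Or.inr rfl
      · exact (hF.2.1 h).2
    have hbz : (b, z) ∈ e := by rw [← h1.2]; exact hyz.1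
    have hz : z = b := rle_anti' hanti rzb (rle_of_mem' hbz)
    apply hne
    rw [Set.mem_singleton_iff, Prod.mk.injEq]
    exact ⟨h1.1, hz⟩
  · by_cases hyzp : (y,z) ∈ pji e a b U
    · have h1 : (y,z) = (a,b) := by
        by_contra hcon
        exact hyz.2 ⟨hyzp, hcon⟩
      rw [Prod.mk.injEq] at h1
      have rax : rle e a x := by
        rcases hxA with rfl | h
        · exact Or.inr rfl
        · exact h.1.1
      have hxa : (x, a) ∈ e := by rw [← h1.1]; exact hxy.1
      have hx : x = a := (rle_anti' hanti rax (rle_of_mem' hxa)).symm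
      apply hne
      rw [Set.mem_singleton_iff, Prod.mk.injEq]
      exact ⟨hx, h1.2⟩
    · exact (pji_open he hF x y z ⟨hxy.1, hxyp⟩ ⟨hyz.1, hyzp⟩).2 hxz'

lemma tint_sub {s : Set (E×E)} : tint e s ⊆ s := by
  rintro z ⟨hz1, hz2⟩
  by_contra h
  exact hz2 (sub_tcl' ⟨hz1, h⟩)

lemma claimA (he : TransRel e) (hanti : ∀ x y : E, (x, y) ∈ e → (y, x) ∈ e → x = y)
    (hF : Ftriple e a b U) (hab : a ≠ b) {x : Set (E×E)} (hx : RegClosed e x)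
    (hsub : x ⊆ pji e a b U) (hmem : (a,b) ∈ x) : x = pji e a b U := by
  have hstep : (a,b) ∉ tcl (e \ x) := by
    have h := hmem
    rw [hx.2, mem_tcl'] at h
    have h' : (a,b) ∈ tint e x := by
      obtain ⟨w, hw1, hw2⟩ := Relation.TransGen.head'_iff.1 h
      rcases Relation.ReflTransGen.cases_head hw2 with rfl | ⟨v, h2, -⟩
      · exact hw1
      · exact absurd (side_disj hF hab (mem_pji.1 (hsub (tint_sub h2))).2.1
          (mem_pji.1 (hsub (tint_sub hw1))).2.2) not_false
    exact h'.2
  apply le_antisymm hsub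
  rintro ⟨u,v⟩ huv
  by_contra huvx
  have huv' : (u,v) ∈ e \ x := ⟨(mem_pji.1 huv).1, huvx⟩
  have hbd := pji_bounds hF huv
  have hau : u ≠ a → (a,u) ∈ e \ x := by
    intro hne
    refine ⟨mem_of_rle' hbd.1 (Ne.symm hne), fun h => ?_⟩
    exact side_disj hF hab (mem_pji.1 huv).2.1 (mem_pji.1 (hsub h)).2.2
  have hvb : v ≠ b → (v,b) ∈ e \ x := by
    intro hne
    refine ⟨mem_of_rle' hbd.2 hne, fun h => ?_⟩
    exact side_disj hF hab (mem_pji.1 (hsub h)).2.1 (mem_pji.1 huv).2.2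
  apply hstep
  rw [mem_tcl']
  by_cases hu : u = a <;> by_cases hv : v = b
  · subst hu; subst hv; exact absurd hmem huvx
  · subst hu
    exact Relation.TransGen.tail (Relation.TransGen.single huv') (hvb hv)
  · subst hv
    exact Relation.TransGen.tail (Relation.TransGen.single (hau hu)) huv'
  · exact Relation.TransGen.tail
      (Relation.TransGen.tail (Relation.TransGen.single (hau hu)) huv') (hvb hv)

lemma lowerCover_pji (he : TransRel e)
    (hanti : ∀ x y : E, (x, y) ∈ e → (y, x) ∈ e → x = y)
    (hF : Ftriple e a b U) (hab : a ≠ b) :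
    IsLowerCoverIn e (pji e a b U) (pji e a b U \ {(a,b)}) := by
  refine ⟨?_, ?_, ?_⟩
  · exact IsClopenIn.regClosed
      ⟨(Set.diff_subset).trans pji_sub_e,
       transRel_of_sub hF hab Set.diff_subset, open_minus he hanti hF hab⟩
  · rw [Set.ssubset_iff_of_subset Set.diff_subset]
    exact ⟨(a,b), hF.mem_ab, fun h => h.2 rfl⟩
  · intro x hxreg hxss
    by_cases hmem : (a,b) ∈ x
    · exact absurd (claimA he hanti hF hab hxreg hxss.subset hmem) hxss.ne
    · exact fun z hz => ⟨hxss.subset hz, fun h => hmem (h ▸ hz)⟩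

lemma lowerCover_loop (he : TransRel e)
    (hanti : ∀ x y : E, (x, y) ∈ e → (y, x) ∈ e → x = y)
    (hF : Ftriple e a a U) :
    IsLowerCoverIn e (pji e a a U) ∅ := by
  rw [pji_loop hanti hF]
  refine ⟨regClosed_empty he, ?_, ?_⟩
  · exact (Set.empty_ssubset).2 ⟨(a,a), rfl⟩
  · intro x hreg hss
    exact (Set.ssubset_singleton_iff.1 hss).le

lemma lowerCover_unique {p q1 q2 : Set (E×E)} (h1 : IsLowerCoverIn e p q1)
    (h2 : IsLowerCoverIn e p q2) : q1 = q2 :=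
  le_antisymm (h2.2.2 _ h1.1 h1.2.1) (h1.2.2 _ h2.1 h2.2.1)

end PJI3


section Struct
variable {E : Type*} {e : Set (E × E)}

lemma tint_sub_e {s : Set (E×E)} : tint e s ⊆ e := Set.diff_subset

lemma exists_pji (he : TransRel e)
    (hanti : ∀ x y : E, (x, y) ∈ e → (y, x) ∈ e → x = y)
    {p : Set (E×E)} (hreg : RegClosed e p) {a b : E} (hab : (a,b) ∈ tint e p) :
    ∃ U, Ftriple e a b U ∧ pji e a b U ⊆ p ∧ (a,b) ∈ pji e a b U := by
  have habe : (a,b) ∈ e := hab.1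
  have habp : (a,b) ∈ p := tint_sub hab
  by_cases heq : a = b
  · subst heq
    refine ⟨{a}, ?_, ?_, ?_⟩
    · exact ⟨habe, by
        rintro y hy
        rw [Set.mem_singleton_iff] at hy
        subst hy
        exact ⟨Or.inr rfl, Or.inr rfl⟩, fun h => absurd rfl h⟩
    · rintro ⟨c,d⟩ hcd
      obtain ⟨hcde, hc, hd⟩ := mem_pji.1 hcd
      have hc' : c = a := by
        rcases hc with rfl | hc
        · rfl
        · exact rle_anti' hanti hc.1.2 hc.1.1
      have hd' : d = a := by
        rcases hd with rfl | hd
        · rfl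
        · exact hd
      rw [hc', hd']
      exact habp
    · exact mem_pji.2 ⟨habe, Or.inl rfl, Or.inr rfl⟩
  · set s : Set (E×E) := tcl (e \ p) with hs
    have hstrans : TransRel s := fun x y z hxy hyz => Relation.TransGen.trans hxy hyz
    have hmemtint : ∀ z : E × E, z ∈ e → z ∉ s → z ∈ p := fun z h1 h2 => tint_sub ⟨h1, h2⟩
    refine ⟨{y | rle e a y ∧ rle e y b ∧ y ≠ a ∧ (a,y) ∉ s}, ?_, ?_, ?_⟩
    · refine ⟨habe, fun y hy => ⟨hy.1, hy.2.1⟩, fun _ => ⟨?_, ?_⟩⟩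
      · intro h
        exact h.2.2.1 rfl
      · exact ⟨rle_of_mem' habe, Or.inr rfl, Ne.symm heq, hab.2⟩
    · rintro ⟨x,y⟩ hxy
      obtain ⟨hxye, hx, hy⟩ := mem_pji.1 hxy
      have hyns : (a,y) ∉ s := by
        rcases hy with rfl | hy
        · exact hab.2
        · exact hy.2.2.2
      by_cases hxa : x = a
      · subst hxa
        exact hmemtint _ hxye hyns
      · have hx' : x ∈ cce e a b ∧ x ∉ {y | rle e a y ∧ rle e y b ∧ y ≠ a ∧ (a,y) ∉ s} := by
          rcases hx with rfl | hx
          · exact absurd rfl hxa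
          · exact hx
        have haxs : (a,x) ∈ s := by
          by_contra hcon
          exact hx'.2 ⟨hx'.1.1, hx'.1.2, hxa, hcon⟩
        refine hmemtint _ hxye fun hxys => ?_
        exact hyns (hstrans _ _ _ haxs hxys)
    · exact mem_pji.2 ⟨habe, Or.inl rfl, Or.inr ⟨rle_of_mem' habe, Or.inr rfl, Ne.symm heq, hab.2⟩⟩

theorem cji_structure (he : TransRel e)
    (hanti : ∀ x y : E, (x, y) ∈ e → (y, x) ∈ e → x = y)
    {p : Set (E×E)} (hp : CJIrr e p) :
    ∃ a b U, Ftriple e a b U ∧ p = pji e a b U := by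
  obtain ⟨hreg, pm, hlc⟩ := hp
  have key : ∃ z ∈ tint e p, ∃ U, Ftriple e z.1 z.2 U ∧ pji e z.1 z.2 U ⊆ p ∧
      z ∈ pji e z.1 z.2 U ∧ ¬ pji e z.1 z.2 U ⊆ pm := by
    by_contra hall
    push_neg at hall
    have hup : p ⊆ pm := by
      have h1 : tint e p ⊆ pm := by
        rintro ⟨a,b⟩ hz
        obtain ⟨U, hF, hsub, hmem⟩ := exists_pji he hanti hreg hz
        have := hall (a,b) hz U hF hsub hmem
        exact this hmem
      calc p = tcl (tint e p) := hreg.2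
        _ ⊆ tcl pm := fun z hz => by
            rw [tcl, Set.mem_setOf_eq] at hz ⊢
            exact Relation.TransGen.mono (fun u v huv => h1 huv) z.1 z.2 hz
        _ = pm := tcl_eq' (by rw [hlc.1.2]; exact fun x y z hxy hyz =>
            Relation.TransGen.trans hxy hyz)
    exact absurd (le_antisymm hup hlc.2.1.subset) (Ne.symm hlc.2.1.ne)
  obtain ⟨⟨a,b⟩, hz, U, hF, hsub, hmem, hnsub⟩ := key
  refine ⟨a, b, U, hF, ?_⟩
  have hregq : RegClosed e (pji e a b U) :=
    IsClopenIn.regClosed (clopen_pji he hanti hF)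
  by_contra hne
  have hss : pji e a b U ⊂ p := lt_of_le_of_ne hsub (fun h => hne h.symm)
  exact hnsub (hlc.2.2 _ hregq hss)

lemma triple_unique (he : TransRel e)
    (hanti : ∀ x y : E, (x, y) ∈ e → (y, x) ∈ e → x = y)
    {a b a' b' : E} {U U' : Set E} (hF : Ftriple e a b U) (hF' : Ftriple e a' b' U')
    (h : pji e a b U = pji e a' b' U') : a = a' ∧ b = b' := by
  have h1 := pji_bounds hF' (h ▸ hF.mem_ab)
  have h2 := pji_bounds hF (h.symm ▸ hF'.mem_ab)
  exact ⟨rle_anti' hanti h2.1 h1.1, rle_anti' hanti h1.2 h2.2⟩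

end Struct


section Necessity
variable {E : Type*} {e : Set (E × E)}

lemma tcl_decomp' {s : Set (E×E)} {a' b' c d : E}
    (h : (c,d) ∈ tcl (s ∪ {(a',b')})) :
    (c,d) ∈ tcl s ∨ ((c = a' ∨ (c,a') ∈ tcl s) ∧ (d = b' ∨ (b',d) ∈ tcl s)) := by
  rw [mem_tcl'] at h
  induction h with
  | single h =>
      rcases h with h | h
      · exact Or.inl (Relation.TransGen.single h)
      · rw [Set.mem_singleton_iff, Prod.mk.injEq] at h
        exact Or.inr ⟨Or.inl h.1, Or.inl h.2⟩
  | @tail d' d h1 h2 ih =>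
      rcases h2 with h2 | h2
      · rcases ih with ih | ⟨hc, hd'⟩
        · exact Or.inl (Relation.TransGen.tail ih h2)
        · refine Or.inr ⟨hc, Or.inr ?_⟩
          rcases hd' with rfl | hd'
          · exact Relation.TransGen.single h2
          · exact Relation.TransGen.tail hd' h2
      · rw [Set.mem_singleton_iff, Prod.mk.injEq] at h2
        obtain ⟨rfl, rfl⟩ := h2
        refine Or.inr ⟨?_, Or.inl rfl⟩
        rcases ih with ih | ⟨hc, -⟩
        · exact Or.inr ih
        · exact hc

lemma joinDep_cond (he : TransRel e)
    (hanti : ∀ x y : E, (x, y) ∈ e → (y, x) ∈ e → x = y)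
    {a b a' b' : E} {U U' : Set E}
    (hF : Ftriple e a b U) (hF' : Ftriple e a' b' U')
    (hd : JoinDep e (pji e a b U) (pji e a' b' U')) :
    rle e a a' ∧ rle e b' b ∧ a' ≠ b' ∧ (a,b) ≠ (a',b') ∧
      ∀ y, rle e a' y → rle e y b' → y ≠ a' → y ≠ b' → (y ∈ U ↔ y ∈ U') := by
  obtain ⟨hpq, q', hq'lc, x, hxreg, h1, h2⟩ := hd
  have hne' : a' ≠ b' := by
    rintro rfl
    have hq : pji e a' a' U' = {(a',a')} := pji_loop hanti hF'
    have hq'empty : q' = ∅ := lowerCover_unique hq'lc (lowerCover_loop he hanti hF')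
    rw [hq'empty, Set.empty_union] at h2
    obtain ⟨⟨c,d⟩, hcd, hcdn⟩ := Set.not_subset.1 h2
    have hcd2 : (c,d) ∈ tcl (x ∪ {(a',a')}) := by
      have h := h1 hcd
      rwa [hq, Set.union_comm] at h
    rcases tcl_decomp' hcd2 with hh | ⟨hc, hd2⟩
    · exact hcdn hh
    · rcases hc with rfl | hc
      · rcases hd2 with rfl | hd2
        · by_cases hab : a = b
          · subst hab
            have hp := pji_loop hanti hF
            rw [hp, Set.mem_singleton_iff, Prod.mk.injEq] at hcd
            obtain ⟨rfl, -⟩ := hcd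
            exact hpq (hp.trans hq.symm)
          · exact side_disj hF hab (mem_pji.1 hcd).2.1 (mem_pji.1 hcd).2.2
        · exact hcdn hd2
      · rcases hd2 with rfl | hd2
        · exact hcdn hc
        · exact hcdn (Relation.TransGen.trans hc hd2)
  have hq'eq : q' = pji e a' b' U' \ {(a',b')} :=
    lowerCover_unique hq'lc (lowerCover_pji he hanti hF' hne')
  rw [hq'eq] at h2
  set s : Set (E×E) := (pji e a' b' U' \ {(a',b')}) ∪ x with hs
  have hqux : pji e a' b' U' ∪ x = s ∪ {(a',b')} := by
    rw [hs]
    conv_lhs => rw [← Set.diff_union_of_subset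
      (Set.singleton_subset_iff.2 hF'.mem_ab)]
    exact Set.union_right_comm _ _ _
  obtain ⟨⟨c,d⟩, hcdp, hcdn⟩ := Set.not_subset.1 h2
  have hcd2 : (c,d) ∈ tcl (s ∪ {(a',b')}) := by
    have h := h1 hcdp; rwa [hqux] at h
  have hcx : (c,d) ∉ tcl s := hcdn
  obtain ⟨hc, hd2⟩ : (c = a' ∨ (c,a') ∈ tcl s) ∧ (d = b' ∨ (b',d) ∈ tcl s) := by
    rcases tcl_decomp' hcd2 with hh | hh
    · exact absurd hh hcx
    · exact hh
  have tcls_e : tcl s ⊆ e :=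
    tcl_sub' (Set.union_subset ((Set.diff_subset).trans pji_sub_e) hxreg.1) he
  have rca' : rle e c a' := by
    rcases hc with rfl | hc
    · exact Or.inr rfl
    · exact Or.inl (tcls_e hc)
  have rb'd : rle e b' d := by
    rcases hd2 with rfl | hd2
    · exact Or.inr rfl
    · exact Or.inl (tcls_e hd2)
  have hbd := pji_bounds hF hcdp
  have raa' : rle e a a' := rle_trans' he hbd.1 rca'
  have rb'b : rle e b' b := rle_trans' he rb'd hbd.2
  have hagree : ∀ y, rle e a' y → rle e y b' → y ≠ a' → y ≠ b' → (y ∈ U ↔ y ∈ U') := by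
    intro y hy1 hy2 hy3 hy4
    constructor
    · intro hyU
      by_contra hyU'
      have hyb' : (y,b') ∈ s := Or.inl ⟨mem_pji.2
        ⟨mem_of_rle' hy2 hy4, Or.inr ⟨⟨hy1, hy2⟩, hyU'⟩, Or.inl rfl⟩, by
          intro h
          rw [Set.mem_singleton_iff, Prod.mk.injEq] at h
          exact hy3 h.1⟩
      have hcy : (c,y) ∈ pji e a b U := by
        refine mem_pji.2 ⟨mem_of_rle' (rle_trans' he rca' hy1) ?_,
          (mem_pji.1 hcdp).2.1, Or.inr hyU⟩
        rintro rfl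
        exact hy3 (rle_anti' hanti rca' hy1)
      by_cases hcys : (c,y) ∈ tcl s
      · apply hcdn
        have t1 : (c,b') ∈ tcl s := Relation.TransGen.tail hcys hyb'
        rcases hd2 with rfl | hd2
        · exact t1
        · exact Relation.TransGen.trans t1 hd2
      · have hcy2 : (c,y) ∈ tcl (s ∪ {(a',b')}) := by
          have h := h1 hcy; rwa [hqux] at h
        rcases tcl_decomp' hcy2 with hh | ⟨-, hy'⟩
        · exact hcys hh
        · rcases hy' with rfl | hy'
          · exact hy4 rfl
          · exact hy4 (rle_anti' hanti hy2 (Or.inl (tcls_e hy')))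
    · intro hyU'
      by_contra hyU
      have ha'y : (a',y) ∈ s := Or.inl ⟨mem_pji.2
        ⟨mem_of_rle' hy1 (Ne.symm hy3), Or.inl rfl, Or.inr hyU'⟩, by
          intro h
          rw [Set.mem_singleton_iff, Prod.mk.injEq] at h
          exact hy4 h.2⟩
      have hyd : (y,d) ∈ pji e a b U := by
        refine mem_pji.2 ⟨mem_of_rle' (rle_trans' he hy2 rb'd) ?_,
          Or.inr ⟨⟨rle_trans' he raa' hy1, rle_trans' he hy2 rb'b⟩, hyU⟩,
          (mem_pji.1 hcdp).2.2⟩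
        rintro rfl
        exact hy4 (rle_anti' hanti hy2 rb'd)
      by_cases hyds : (y,d) ∈ tcl s
      · apply hcdn
        have t1 : (a',d) ∈ tcl s := Relation.TransGen.head ha'y hyds
        rcases hc with rfl | hc
        · exact t1
        · exact Relation.TransGen.trans hc t1
      · have hyd2 : (y,d) ∈ tcl (s ∪ {(a',b')}) := by
          have h := h1 hyd; rwa [hqux] at h
        rcases tcl_decomp' hyd2 with hh | ⟨hy', -⟩
        · exact hyds hh
        · rcases hy' with rfl | hy'
          · exact hy3 rfl
          · exact hy3 (rle_anti' hanti hy1 (Or.inl (tcls_e hy'))).symm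
  refine ⟨raa', rb'b, hne', ?_, hagree⟩
  intro h
  rw [Prod.mk.injEq] at h
  obtain ⟨ha, hb⟩ := h
  have hab : a ≠ b := by rw [ha, hb]; exact hne'
  have hUeq : U = U' := by
    ext y
    by_cases hy : y = b
    · subst hy
      constructor
      · intro _
        rw [hb]
        exact (hF'.2.2 hne').2
      · intro _
        exact (hF.2.2 hab).2
    · constructor
      · intro hyU
        refine (hagree y ?_ ?_ ?_ ?_).1 hyU
        · rw [← ha]; exact (hF.2.1 hyU).1
        · rw [← hb]; exact (hF.2.1 hyU).2
        · intro h; rw [← ha] at h; exact (hF.2.2 hab).1 (h ▸ hyU)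
        · intro h; rw [← hb] at h; exact hy h
      · intro hyU'
        refine (hagree y (hF'.2.1 hyU').1 (hF'.2.1 hyU').2
          (fun h => (hF'.2.2 hne').1 (h ▸ hyU')) ?_).2 hyU'
        intro h; rw [← hb] at h; exact hy h
  apply hpq
  rw [ha, hb, hUeq]

end Necessity

section Sufficiency
variable {E : Type*} {e : Set (E × E)}

lemma cond_joinDep (he : TransRel e)
    (hanti : ∀ x y : E, (x, y) ∈ e → (y, x) ∈ e → x = y)
    {a b a'' b'' : E} {U U'' : Set E}
    (hF : Ftriple e a b U) (hF'' : Ftriple e a'' b'' U'')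
    (hra : rle e a a'') (hrb : rle e b'' b) (h3 : a'' ≠ b'')
    (h4 : (a,b) ≠ (a'',b''))
    (h5 : ∀ y, rle e a'' y → rle e y b'' → y ≠ a'' → y ≠ b'' → (y ∈ U ↔ y ∈ U'')) :
    JoinDep e (pji e a b U) (pji e a'' b'' U'') := by
  have rab'' : rle e a'' b'' := rle_of_mem' hF''.1
  have hab : a ≠ b := by
    rintro rfl
    exact h3 (rle_anti' hanti rab'' (rle_trans' he hrb hra))
  have hrab : rle e a b := rle_trans' he hra (rle_trans' he rab'' hrb)
  set K : Set E := {z | z = a ∨ z = a'' ∨ (z ∈ U'' ∧ z ≠ b'') ∨ (z ∈ U ∧ ¬ rle e b'' z)}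
    with hK
  set W : Set E := {y | rle e a y ∧ rle e y b ∧ y ∉ K} with hW
  have hWa : a ∉ W := fun h => h.2.2 (Or.inl rfl)
  have hKa'' : a'' ∈ K := Or.inr (Or.inl rfl)
  have hWb : b ∈ W := by
    refine ⟨hrab, Or.inr rfl, ?_⟩
    rintro (h | h | ⟨hbU, hbne⟩ | ⟨-, hnr⟩)
    · exact hab h.symm
    · exact h3 (rle_anti' hanti rab'' (by rw [← h]; exact hrb))
    · exact hbne (rle_anti' hanti (hF''.2.1 hbU).2 hrb)
    · exact hnr hrb
  have hWb'' : b'' ∈ W := by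
    refine ⟨rle_trans' he hra rab'', hrb, ?_⟩
    rintro (h | h | ⟨-, hbne⟩ | ⟨-, hnr⟩)
    · have h1 : rle e a'' a := by rw [← h]; exact rab''
      exact h3 ((rle_anti' hanti h1 hra).trans h.symm)
    · exact h3 h.symm
    · exact hbne rfl
    · exact hnr (Or.inr rfl)
  have hFW : Ftriple e a b W :=
    ⟨mem_of_rle' hrab hab, fun y hy => ⟨hy.1, hy.2.1⟩, fun _ => ⟨hWa, hWb⟩⟩
  have hq' := lowerCover_pji he hanti hF'' h3
  have hsubZ : pji e a'' b'' U'' \ {(a'',b'')} ⊆ e \ pji e a b W := by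
    rintro ⟨c,d⟩ ⟨hcd, hne⟩
    refine ⟨pji_sub_e hcd, fun hmem => ?_⟩
    obtain ⟨hcde, hcA, hdB⟩ := mem_pji.1 hmem
    obtain ⟨-, hcA'', hdB''⟩ := mem_pji.1 hcd
    have hdb'' : d = b'' := by
      rcases hdB'' with h | h
      · exact h
      · by_contra hdneb
        have hdK : d ∈ K := Or.inr (Or.inr (Or.inl ⟨h, hdneb⟩))
        have hdb : d = b := by
          rcases hdB with rfl | hdW
          · rfl
          · exact absurd hdK hdW.2.2
        exact hdneb (rle_anti' hanti (hF''.2.1 h).2 (hdb ▸ hrb))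
    have hca'' : c ≠ a'' := by
      rintro rfl
      apply hne
      rw [Set.mem_singleton_iff, Prod.mk.injEq]
      exact ⟨rfl, hdb''⟩
    have hcc : c ∈ cce e a'' b'' ∧ c ∉ U'' := by
      rcases hcA'' with rfl | h
      · exact absurd rfl hca''
      · exact h
    have hcnea : c ≠ a := by
      rintro rfl
      exact hca'' (rle_anti' hanti hra hcc.1.1)
    have hcK : c ∈ K := by
      rcases hcA with rfl | hcW
      · exact absurd rfl hcnea
      · by_contra hnotK
        exact hcW.2 ⟨rle_trans' he hra hcc.1.1, rle_trans' he hcc.1.2 hrb, hnotK⟩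
    rcases hcK with rfl | rfl | ⟨hcU'', -⟩ | ⟨hcU, -⟩
    · exact hcnea rfl
    · exact hca'' rfl
    · exact hcc.2 hcU''
    · have hcneb'' : c ≠ b'' := by
        rintro rfl
        exact hcc.2 (hF''.2.2 h3).2
      exact hcc.2 ((h5 c hcc.1.1 hcc.1.2 hca'' hcneb'').1 hcU)
  refine ⟨?_, pji e a'' b'' U'' \ {(a'',b'')}, hq',
    e \ pji e a b W, ((clopen_pji he hanti hFW).compl).regClosed, ?_, ?_⟩
  · intro h
    exact h4 (by
      have := triple_unique he hanti hF hF'' h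
      rw [Prod.mk.injEq]
      exact this)
  · rintro ⟨c,d⟩ hcd
    by_cases hin : (c,d) ∈ pji e a b W
    · obtain ⟨hcde, hcA, hdB⟩ := mem_pji.1 hin
      obtain ⟨-, hcA0, hdB0⟩ := mem_pji.1 hcd
      have hrca : rle e c a'' := by
        rcases hcA with rfl | hcW
        · exact hra
        · have hcK : c ∈ K := by
            by_contra hnotK
            exact hcW.2 ⟨hcW.1.1, hcW.1.2, hnotK⟩
          rcases hcK with rfl | rfl | ⟨hcU'', hcneb⟩ | ⟨hcU, -⟩
          · exact hra
          · exact Or.inr rfl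
          · exfalso
            have hcnea'' : c ≠ a'' := fun h => (hF''.2.2 h3).1 (h ▸ hcU'')
            have hcU' : c ∈ U :=
              (h5 c (hF''.2.1 hcU'').1 (hF''.2.1 hcU'').2 hcnea'' hcneb).2 hcU''
            rcases hcA0 with rfl | hc0
            · exact (hF.2.2 hab).1 hcU'
            · exact hc0.2 hcU'
          · exfalso
            rcases hcA0 with rfl | hc0
            · exact (hF.2.2 hab).1 hcU
            · exact hc0.2 hcU
      have hrbd : rle e b'' d := by
        rcases hdB with rfl | hdW
        · exact hrb
        · rcases hdB0 with rfl | hdU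
          · exact hrb
          · by_contra hnr
            exact hdW.2.2 (Or.inr (Or.inr (Or.inr ⟨hdU, hnr⟩)))
      have hstep2 : (a'',b'') ∈ pji e a'' b'' U'' ∪ (e \ pji e a b W) :=
        Or.inl hF''.mem_ab
      have hs1 : c ≠ a'' → (c,a'') ∈ pji e a'' b'' U'' ∪ (e \ pji e a b W) := by
        intro hne
        refine Or.inr ⟨mem_of_rle' hrca hne, fun hmem => ?_⟩
        rcases (mem_pji.1 hmem).2.2 with h | h
        · exact h3 (rle_anti' hanti rab'' (by rw [h]; exact hrb))
        · exact h.2.2 hKa''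
      have hs3 : d ≠ b'' → (b'',d) ∈ pji e a'' b'' U'' ∪ (e \ pji e a b W) := by
        intro hne
        refine Or.inr ⟨mem_of_rle' hrbd (fun h => hne h.symm), fun hmem => ?_⟩
        rcases (mem_pji.1 hmem).2.1 with h | h
        · exact h3 (rle_anti' hanti rab'' (by rw [h]; exact hra))
        · exact h.2 hWb''
      rw [mem_tcl']
      by_cases hc : c = a'' <;> by_cases hd : d = b''
      · subst hc; subst hd
        exact Relation.TransGen.single hstep2
      · subst hc
        exact Relation.TransGen.tail (Relation.TransGen.single hstep2) (hs3 hd)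
      · subst hd
        exact Relation.TransGen.head (hs1 hc) (Relation.TransGen.single hstep2)
      · exact Relation.TransGen.head (hs1 hc)
          (Relation.TransGen.tail (Relation.TransGen.single hstep2) (hs3 hd))
    · exact sub_tcl' (Or.inr ⟨(mem_pji.1 hcd).1, hin⟩)
  · intro hsub
    have hab' := hsub hF.mem_ab
    have hcl : tcl ((pji e a'' b'' U'' \ {(a'',b'')}) ∪ (e \ pji e a b W)) ⊆
        e \ pji e a b W :=
      tcl_sub' (Set.union_subset hsubZ Set.Subset.rfl) (pji_open he hFW)
    exact (hcl hab').2 hFW.mem_ab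

end Sufficiency

/-- for an antisymmetric transitive relation `e` on a finite set, the
join-dependency relation on the completely join-irreducible elements of `Reg(e)` is
transitive; being irreflexive by definition, it is a strict ordering. -/
theorem joinDependency_transitive {E : Type*} [Finite E] (e : Set (E × E))
    (he : TransRel e) (hanti : ∀ x y : E, (x, y) ∈ e → (y, x) ∈ e → x = y) :
    (∀ p q r : Set (E × E), CJIrr e p → CJIrr e q → CJIrr e r →
      JoinDep e p q → JoinDep e q r → JoinDep e p r) ∧
    (∀ p : Set (E × E), CJIrr e p → ¬ JoinDep e p p) := by
  constructor
  · intro p q r hp hq hr hpq hqr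
    obtain ⟨a, b, U, hFp, rfl⟩ := cji_structure he hanti hp
    obtain ⟨a', b', U', hFq, rfl⟩ := cji_structure he hanti hq
    obtain ⟨a'', b'', U'', hFr, rfl⟩ := cji_structure he hanti hr
    obtain ⟨r1, r2, r3, r4, r5⟩ := joinDep_cond he hanti hFp hFq hpq
    obtain ⟨s1, s2, s3, s4, s5⟩ := joinDep_cond he hanti hFq hFr hqr
    refine cond_joinDep he hanti hFp hFr (rle_trans' he r1 s1) (rle_trans' he s2 r2)
      s3 ?_ ?_
    · intro h
      rw [Prod.mk.injEq] at h
      apply r4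
      rw [Prod.mk.injEq]
      constructor
      · exact rle_anti' hanti r1 (by rw [h.1]; exact s1)
      · exact rle_anti' hanti (by rw [h.2]; exact s2) r2
    · intro y hy1 hy2 hy3 hy4
      have hy1' : rle e a' y := rle_trans' he s1 hy1
      have hy2' : rle e y b' := rle_trans' he hy2 s2
      have hy3' : y ≠ a' := by
        rintro rfl
        exact hy3 (rle_anti' hanti hy1 s1).symm
      have hy4' : y ≠ b' := by
        rintro rfl
        exact hy4 (rle_anti' hanti hy2 s2)
      rw [r5 y hy1' hy2' hy3' hy4', s5 y hy1 hy2 hy3 hy4]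
  · rintro p hp ⟨hne, -⟩
    exact hne rfl
end
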